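/- In an infinite Fort transformation group (F,G), if x ≠ b has finite orbit xG and (x,y) is proximal, then x = y. -/
import Mathlib


/-- The Fort topology on `F` with particular point `b`: a set is open iff it misses `b`
or has finite complement. -/
def fortTop (F : Type*) (b : F) : TopologicalSpace F where
  IsOpen U := b ∈ U → (Uᶜ : Set F).Finite
  isOpen_univ := fun _ => by simp
  isOpen_inter := fun U V hU hV h => by
    rw [Set.compl_inter]
    exact (hU h.1).union (hV h.2)
  isOpen_sUnion := fun S hS h => by
    obtain ⟨U, hUS, hbU⟩ := h
    exact (hS U hUS hbU).subset (Set.compl_subset_compl.2 (Set.subset_sUnion_of_mem hUS))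

/-- Proximality in a transformation semigroup (via a net encoded as a nontrivial filter). -/
def ProxPair (S X : Type*) [TopologicalSpace X] [SMul S X] (x y : X) : Prop :=
  ∃ z : X, ∃ l : Filter S, l.NeBot ∧
    Filter.Tendsto (fun s => s • x) l (nhds z) ∧ Filter.Tendsto (fun s => s • y) l (nhds z)

/-- In an infinite Fort transformation group `(F,G)`, if `x ≠ b` has finite orbit and
`(x,y)` is proximal, then `x = y`. -/
theorem stmt10 {F G : Type*} [Group G] [MulAction G F] (b : F) (hF : Infinite F)
    (hb : ∀ g : G, g • b = b)
    (hcont : ∀ g : G, @Continuous F F (fortTop F b) (fortTop F b) fun x => g • x)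
    (x y : F) (hx : x ≠ b) (horb : (MulAction.orbit G x).Finite)
    (h : @ProxPair G F (fortTop F b) _ x y) : x = y := by
  letI : TopologicalSpace F := fortTop F b
  obtain ⟨z, l, hl, hzx, hzy⟩ := h
  -- b is not in the orbit of x
  have hbo : b ∉ MulAction.orbit G x := by
    rintro ⟨g, rfl⟩
    exact hx (by simpa using congrArg (fun w => g⁻¹ • w) (hb g).symm)
  -- the orbit is closed
  have hclosed : IsClosed (MulAction.orbit G x) := by
    rw [← isOpen_compl_iff]
    intro _
    simpa using horb
  -- z is in the orbit
  have hzorb : z ∈ MulAction.orbit G x := by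
    have : z ∈ closure (MulAction.orbit G x) :=
      mem_closure_of_tendsto hzx (Filter.Eventually.of_forall fun g => ⟨g, rfl⟩)
    rwa [hclosed.closure_eq] at this
  have hzb : z ≠ b := fun hzb => hbo (hzb ▸ hzorb)
  -- {z} is open, hence a neighborhood of z
  have hzopen : IsOpen ({z} : Set F) := fun hbz => absurd (Set.mem_singleton_iff.mp hbz).symm hzb
  have hnz : ({z} : Set F) ∈ nhds z := hzopen.mem_nhds rfl
  have hex : ∃ g : G, g • x = z ∧ g • y = z := by
    have h1 : ∀ᶠ g : G in l, g • x = z := hzx.eventually (Filter.eventually_of_mem hnz fun w hw => hw)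
    have h2 : ∀ᶠ g : G in l, g • y = z := hzy.eventually (Filter.eventually_of_mem hnz fun w hw => hw)
    exact ((h1.and h2).exists)
  obtain ⟨g, hg1, hg2⟩ := hex
  have := hg1.trans hg2.symm
  simpa using congrArg (fun w => g⁻¹ • w) this
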